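/- arXiv:2110.11021 — 3 statements merged into one kernel-verified Lean document; each statement's English description precedes it below -/
import Mathlib

section
/- Let η ∈ ℝ, δ_1, …, δ_N ∈ ℝ with 1 + δ_l ≠ 0 for all relevant l, and suppose real numbers ℓ̃_0, ℓ̃_1, …, ℓ̃_{N−1} satisfy the equations (δ_N − δ_{N−k+1}·η^{k−1})·(ℓ̃_0 + η) = ∑_{j=1}^{k−1} (1 + δ_{N−k+1}·η^{k−1−j})·ℓ̃_j for every k ∈ {2, …, N}. Then ℓ̃_k = a_k·(ℓ̃_0 + η) for all k ∈ {1, …, N−1}, where a_k := [(δ_{N−k+1} − η·δ_{N−k})/(δ_{N−k} + 1)] · ∏_{j=0}^{k−2} [(η + δ_{N−j})/(δ_{N−j−1} + 1)]. -/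
/-- Explicit solution of the linear system (Lemma analytic_ab): if
`(δ N - δ (N-k+1) η^{k-1}) (ℓ̃ 0 + η) = ∑_{j=1}^{k-1} (1 + δ (N-k+1) η^{k-1-j}) ℓ̃ j`
for all `k ∈ {2, …, N}`, then for all `k ∈ {1, …, N-1}`,
`ℓ̃ k = a_k (ℓ̃ 0 + η)` with
`a_k = ((δ (N-k+1) - η δ (N-k))/(δ (N-k) + 1)) ∏_{j=0}^{k-2} ((η + δ (N-j))/(δ (N-j-1) + 1))`. -/
theorem analytic_ab (N : ℕ) (η : ℝ) (δ : ℕ → ℝ)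
    (hden : ∀ l ≤ N, 1 + δ l ≠ 0) (ℓt : ℕ → ℝ)
    (hsys : ∀ k, 2 ≤ k → k ≤ N →
      (δ N - δ (N - k + 1) * η ^ (k - 1)) * (ℓt 0 + η)
        = ∑ j ∈ Finset.Icc 1 (k - 1), (1 + δ (N - k + 1) * η ^ (k - 1 - j)) * ℓt j) :
    ∀ k, 1 ≤ k → k ≤ N - 1 →
      ℓt k = ((δ (N - k + 1) - η * δ (N - k)) / (δ (N - k) + 1)) *
          (∏ j ∈ Finset.range (k - 1), ((η + δ (N - j)) / (δ (N - j - 1) + 1))) *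
          (ℓt 0 + η) := by
  set P : ℝ := ℓt 0 + η with hP
  set T : ℕ → ℝ := fun m => ∑ j ∈ Finset.Icc 1 m, η ^ (m - j) * ℓt j with hT
  set S : ℕ → ℝ := fun m => ∑ j ∈ Finset.Icc 1 m, ℓt j with hS
  set b : ℕ → ℝ := fun m => ∏ j ∈ Finset.range m, ((η + δ (N - j)) / (δ (N - j - 1) + 1))
    with hb
  -- recurrences for S and T
  have Srec : ∀ m, 1 ≤ m → S m = S (m - 1) + ℓt m := by
    intro m hm
    obtain ⟨n, rfl⟩ := Nat.exists_eq_add_of_le hm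
    simp only [hS]
    rw [show 1 + n = n + 1 by omega, Nat.add_sub_cancel,
      Finset.sum_Icc_succ_top (by omega : 1 ≤ n + 1)]
  have Trec : ∀ m, 1 ≤ m → T m = η * T (m - 1) + ℓt m := by
    intro m hm
    obtain ⟨n, rfl⟩ := Nat.exists_eq_add_of_le hm
    simp only [hT]
    rw [show 1 + n = n + 1 by omega, Nat.add_sub_cancel,
      Finset.sum_Icc_succ_top (by omega : 1 ≤ n + 1), Finset.mul_sum]
    simp only [Nat.sub_self, pow_zero, one_mul]
    congr 1
    apply Finset.sum_congr rfl
    intro j hj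
    simp only [Finset.mem_Icc] at hj
    rw [show n + 1 - j = (n - j) + 1 by omega, pow_succ]
    ring
  -- the system, rewritten
  have eqn : ∀ m, m ≤ N - 1 → S m + δ (N - m) * (T m + η ^ m * P) = δ N * P := by
    intro m hm
    rcases Nat.eq_zero_or_pos m with rfl | hm1
    · simp [hS, hT]
    · have hN : 2 ≤ m + 1 := by omega
      have hN2 : m + 1 ≤ N := by omega
      have h := hsys (m + 1) hN hN2
      rw [show N - (m + 1) + 1 = N - m by omega, Nat.add_sub_cancel] at h
      have expand : ∑ j ∈ Finset.Icc 1 m, (1 + δ (N - m) * η ^ (m - j)) * ℓt j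
          = S m + δ (N - m) * T m := by
        simp only [hS, hT, Finset.mul_sum, ← Finset.sum_add_distrib]
        apply Finset.sum_congr rfl
        intro j _
        ring
      rw [expand] at h
      linear_combination -h
  -- subtraction identity
  have sub : ∀ m, 1 ≤ m → m ≤ N - 1 →
      ℓt m * (1 + δ (N - m))
        = (δ (N - m + 1) - η * δ (N - m)) * (T (m - 1) + η ^ (m - 1) * P) := by
    intro m hm hm2
    have h1 := eqn m hm2
    have h2 := eqn (m - 1) (by omega)
    rw [show N - (m - 1) = N - m + 1 by omega] at h2
    have hpow : η ^ m = η ^ (m - 1) * η := by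
      rw [← pow_succ, show m - 1 + 1 = m by omega]
    rw [Srec m hm, Trec m hm, hpow] at h1
    linear_combination h1 - h2
  -- closed form for U
  have Ulem : ∀ m, m ≤ N - 1 → T m + η ^ m * P = b m * P := by
    intro m
    induction m with
    | zero => intro _; simp [hT, hb]
    | succ n ih =>
      intro hn
      have ihn := ih (by omega)
      have hsub := sub (n + 1) (by omega) hn
      rw [Nat.add_sub_cancel, show N - (n + 1) + 1 = N - n by omega] at hsub
      have hd : (1 : ℝ) + δ (N - (n + 1)) ≠ 0 := hden _ (by omega)
      have hbsucc : b (n + 1) = b n * ((η + δ (N - n)) / (δ (N - (n + 1)) + 1)) := by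
        simp only [hb]
        rw [Finset.prod_range_succ, show N - n - 1 = N - (n + 1) from by omega]
      have hd2 : δ (N - (n + 1)) + 1 ≠ 0 := by rw [add_comm]; exact hd
      rw [Trec (n + 1) (by omega), Nat.add_sub_cancel, hbsucc, pow_succ]
      apply mul_right_cancel₀ hd2
      have hclear : b n * ((η + δ (N - n)) / (δ (N - (n + 1)) + 1)) * P * (δ (N - (n + 1)) + 1)
          = b n * (η + δ (N - n)) * P := by
        field_simp
      rw [hclear]
      linear_combination hsub + (η * (δ (N - (n + 1)) + 1) + (δ (N - n) - η * δ (N - (n + 1)))) * ihn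
  -- conclusion
  intro k hk hk2
  have hsub := sub k hk hk2
  have hU := Ulem (k - 1) (by omega)
  have hd : (1 : ℝ) + δ (N - k) ≠ 0 := hden _ (by omega)
  rw [hU] at hsub
  have hd' : δ (N - k) + 1 ≠ 0 := by rw [add_comm]; exact hd
  rw [div_mul_eq_mul_div, div_mul_eq_mul_div, eq_div_iff hd']
  linear_combination hsub
end

section
/- Let N ≥ 1, η ∈ ℝ, and δ_1,…,δ_N ∈ ℝ with 1 + δ_l ≠ 0. Define a_k := [(δ_{N−k+1} − η·δ_{N−k})/(δ_{N−k}+1)] · ∏_{j=0}^{k−2}[(η+δ_{N−j})/(δ_{N−j−1}+1)] for k ∈ {1,…,N−1}. Then ∑_{k=1}^{N−1} a_k = δ_N − δ_1 · ∏_{j=0}^{N−2} [(η+δ_{N−j})/(1+δ_{N−j−1})]. -/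
/-- Closed-form sum of the coefficients `a_k`:
`∑_{k=1}^{N-1} a_k = δ N - δ 1 ∏_{j=0}^{N-2} ((η + δ (N-j))/(1 + δ (N-j-1)))`,
where `a_k = ((δ (N-k+1) - η δ (N-k))/(δ (N-k) + 1)) ∏_{j=0}^{k-2} ((η + δ (N-j))/(δ (N-j-1) + 1))`. -/
theorem sum_of_a_coeffs (N : ℕ) (hN : 1 ≤ N) (η : ℝ) (δ : ℕ → ℝ)
    (hden : ∀ l ≤ N, 1 + δ l ≠ 0) :
    ∑ k ∈ Finset.Icc 1 (N - 1),
        ((δ (N - k + 1) - η * δ (N - k)) / (δ (N - k) + 1)) *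
          ∏ j ∈ Finset.range (k - 1), ((η + δ (N - j)) / (δ (N - j - 1) + 1))
      = δ N - δ 1 * ∏ j ∈ Finset.range (N - 1), ((η + δ (N - j)) / (1 + δ (N - j - 1))) := by
  set P : ℕ → ℝ := fun m => ∏ j ∈ Finset.range m, ((η + δ (N - j)) / (δ (N - j - 1) + 1))
    with hP
  set g : ℕ → ℝ := fun i => δ (N - i) * P i with hg
  have hIcc : Finset.Icc 1 (N - 1) = Finset.Ico 1 N := by
    rw [← Finset.Ico_add_one_right_eq_Icc]
    congr 1
    omega
  rw [hIcc, Finset.sum_Ico_eq_sum_range]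
  have hterm : ∀ i ∈ Finset.range (N - 1),
      ((δ (N - (1 + i) + 1) - η * δ (N - (1 + i))) / (δ (N - (1 + i)) + 1)) *
        ∏ j ∈ Finset.range (1 + i - 1), ((η + δ (N - j)) / (δ (N - j - 1) + 1))
        = g i - g (i + 1) := by
    intro i hi
    have hi' : i < N - 1 := Finset.mem_range.mp hi
    have e1 : N - (1 + i) + 1 = N - i := by omega
    have e2 : N - (1 + i) = N - i - 1 := by omega
    have e2' : N - (i + 1) = N - i - 1 := by omega
    have e3 : 1 + i - 1 = i := by omega
    rw [e1, e2, e3]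
    have hPsucc : P (i + 1) = P i * ((η + δ (N - i)) / (δ (N - i - 1) + 1)) :=
      Finset.prod_range_succ _ _
    have hne : δ (N - i - 1) + 1 ≠ 0 := by
      have h := hden (N - i - 1) (by omega)
      intro h0; apply h; linarith
    simp only [hg, hPsucc, e2']
    have : (∏ j ∈ Finset.range i, ((η + δ (N - j)) / (δ (N - j - 1) + 1))) = P i := rfl
    rw [this]
    field_simp
    ring
  rw [Finset.sum_congr rfl hterm, Finset.sum_range_sub' g]
  have e4 : N - (N - 1) = 1 := by omega
  have e5 : N - 0 = N := by omega
  simp only [hg, e4, e5]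
  have hP0 : P 0 = 1 := by simp [hP]
  rw [hP0, mul_one]
  congr 2
  exact Finset.prod_congr rfl fun j _ => by rw [add_comm (δ (N - j - 1)) 1]
end

section
/- Suppose nonnegative real sequences satisfy: γ_{k,f} = ∑_{j=0}^{k−1} c_j + c_{k,f} with c_{k+k_2} ≤ c_k·c_{k_2}, c_{k+k_2,f} ≤ c_k·c_{k_2,f} for all k, k_2 ≥ 0, and c_k + c_{k+1,f} ≤ (1+ε_f)·c_{k,f} for all k ≥ 0, where c_j, c_{j,f} ≥ 0 and ε_f > 0. Then for every N ≥ 2, every k ∈ {1,…,N−1}, and every l ≥ 0: ε_f·[∑_{n=l+1}^{N−k+l} c_n + c_{N−k+1+l,f}]·∏_{i=2}^{N−k}(γ_{i,f} − 1) ≥ (1+ε_f)·(c_{N−k+l} + c_{N−k+1+l,f} − c_{N−k+l,f})·∏_{i=2}^{N−k} γ_{i,f}, provided additionally γ_{i,f} ≥ 1 for all i ≥ 1. -/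
lemma submult_aux (c cf γf : ℕ → ℝ) (εf : ℝ) (hεf : 0 < εf)
    (hc : ∀ k, 0 ≤ c k) (hcf : ∀ k, 0 ≤ cf k)
    (hγf : ∀ k, γf k = (∑ j ∈ Finset.range k, c j) + cf k)
    (hsub : ∀ k k₂, c (k + k₂) ≤ c k * c k₂)
    (hsubf : ∀ k k₂, cf (k + k₂) ≤ c k * cf k₂)
    (hshift : ∀ k, c k + cf (k + 1) ≤ (1 + εf) * cf k)
    (hγ1 : ∀ i, 1 ≤ i → 1 ≤ γf i) :
    ∀ m, 1 ≤ m → ∀ l : ℕ,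
      εf * ((∑ n ∈ Finset.Icc (l + 1) (m + l), c n) + cf (m + 1 + l)) *
          (∏ i ∈ Finset.Icc 2 m, (γf i - 1))
        ≥ (1 + εf) * (c (m + l) + cf (m + 1 + l) - cf (m + l)) *
          (∏ i ∈ Finset.Icc 2 m, γf i) := by
  intro m hm
  induction m, hm using Nat.le_induction with
  | base =>
    intro l
    rw [show Finset.Icc 2 1 = (∅ : Finset ℕ) from by decide]
    rw [show (1 : ℕ) + l = l + 1 by omega, show (1 : ℕ) + 1 + l = (l + 1) + 1 by omega,
      Finset.Icc_self, Finset.sum_singleton]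
    simp only [Finset.prod_empty, mul_one]
    have h := hshift (l + 1)
    nlinarith
  | succ m hm ih =>
    intro l
    -- abbreviations
    have h2m : 2 ≤ m + 1 := by omega
    rw [Finset.prod_Icc_succ_top h2m, Finset.prod_Icc_succ_top h2m]
    set P := ∏ i ∈ Finset.Icc 2 m, (γf i - 1) with hP
    set Q := ∏ i ∈ Finset.Icc 2 m, γf i with hQ
    have hPpos : 0 ≤ P := Finset.prod_nonneg (fun i hi => by
      have : 1 ≤ γf i := hγ1 i (by simp at hi; omega)
      linarith)
    have hγm : 1 ≤ γf (m + 1) := hγ1 (m + 1) (by omega)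
    -- IH at l+1
    have hIH := ih (l + 1)
    rw [show m + (l + 1) = m + 1 + l by omega, show m + 1 + (l + 1) = m + 1 + 1 + l by omega]
      at hIH
    set B := (∑ n ∈ Finset.Icc (l + 1 + 1) (m + 1 + l), c n) + cf (m + 1 + 1 + l) with hB
    set A := (∑ n ∈ Finset.Icc (l + 1) (m + 1 + l), c n) + cf (m + 1 + 1 + l) with hA
    have hAB : A = c (l + 1) + B := by
      rw [hA, hB, Finset.Icc_eq_cons_Ioc (by omega : l + 1 ≤ m + 1 + l), Finset.sum_cons,
        ← Finset.Icc_add_one_left_eq_Ioc]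
      ring
    -- key bound : A ≤ c (l+1) * γf (m+1)
    have hkey : A ≤ c (l + 1) * γf (m + 1) := by
      rw [hA, hγf (m + 1), mul_add]
      have hsum : (∑ n ∈ Finset.Icc (l + 1) (m + 1 + l), c n)
          ≤ c (l + 1) * ∑ j ∈ Finset.range (m + 1), c j := by
        rw [← Finset.Ico_add_one_right_eq_Icc, Finset.sum_Ico_eq_sum_range,
          show m + 1 + l + 1 - (l + 1) = m + 1 by omega, Finset.mul_sum]
        exact Finset.sum_le_sum (fun j _ => hsub (l + 1) j)
      have hcf2 : cf (m + 1 + 1 + l) ≤ c (l + 1) * cf (m + 1) := by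
        have := hsubf (l + 1) (m + 1)
        rw [show l + 1 + (m + 1) = m + 1 + 1 + l by omega] at this
        exact this
      linarith
    -- A * (γ - 1) ≥ B * γ
    have step1 : B * γf (m + 1) ≤ A * (γf (m + 1) - 1) := by nlinarith
    set R := (1 + εf) * (c (m + 1 + l) + cf (m + 1 + 1 + l) - cf (m + 1 + l)) with hR
    calc R * (Q * γf (m + 1)) = (R * Q) * γf (m + 1) := by ring
      _ ≤ (εf * B * P) * γf (m + 1) :=
          mul_le_mul_of_nonneg_right hIH (by linarith)
      _ = (εf * P) * (B * γf (m + 1)) := by ring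
      _ ≤ (εf * P) * (A * (γf (m + 1) - 1)) :=
          mul_le_mul_of_nonneg_left step1 (by positivity)
      _ = εf * A * (P * (γf (m + 1) - 1)) := by ring

/-- Lemma (submult_induction_pdf): given nonnegative submultiplicative sequences
`c`, `c_f` with `γ_f k = ∑_{j<k} c j + c_f k`, `c_k + c_{k+1,f} ≤ (1+ε_f) c_{k,f}`,
`ε_f > 0` and `γ_f i ≥ 1` for `i ≥ 1`, then for all `N ≥ 2`, `k ∈ {1,…,N-1}`, `l ≥ 0`:
`ε_f (∑_{n=l+1}^{N-k+l} c n + c_f (N-k+1+l)) ∏_{i=2}^{N-k} (γ_f i - 1)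
  ≥ (1+ε_f) (c (N-k+l) + c_f (N-k+1+l) - c_f (N-k+l)) ∏_{i=2}^{N-k} γ_f i`. -/
theorem submult_induction_pdf (c cf γf : ℕ → ℝ) (εf : ℝ) (hεf : 0 < εf)
    (hc : ∀ k, 0 ≤ c k) (hcf : ∀ k, 0 ≤ cf k)
    (hγf : ∀ k, γf k = (∑ j ∈ Finset.range k, c j) + cf k)
    (hsub : ∀ k k₂, c (k + k₂) ≤ c k * c k₂)
    (hsubf : ∀ k k₂, cf (k + k₂) ≤ c k * cf k₂)
    (hshift : ∀ k, c k + cf (k + 1) ≤ (1 + εf) * cf k)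
    (hγ1 : ∀ i, 1 ≤ i → 1 ≤ γf i) :
    ∀ N, 2 ≤ N → ∀ k, 1 ≤ k → k ≤ N - 1 → ∀ l : ℕ,
      εf * ((∑ n ∈ Finset.Icc (l + 1) (N - k + l), c n) + cf (N - k + 1 + l)) *
          (∏ i ∈ Finset.Icc 2 (N - k), (γf i - 1))
        ≥ (1 + εf) * (c (N - k + l) + cf (N - k + 1 + l) - cf (N - k + l)) *
          (∏ i ∈ Finset.Icc 2 (N - k), γf i) := by
  intro N hN k hk1 hk2 l
  exact submult_aux c cf γf εf hεf hc hcf hγf hsub hsubf hshift hγ1 (N - k) (by omega) l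
end
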